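/- Let F : (0,∞) → (0,∞) be continuous, strictly increasing with lim_{t→∞} F(t) = ∞, let U : ℝ² → (0,∞) be measurable with lim_{|x|→∞} F(1/U(x))/|x| = 1, and let ℓ > 0. Then for every ε ∈ (0,1) there exists R > 0 such that for all x ∈ ℝ² with |x| > R, (|φ₀|² * U)(x) ≥ (1−ε)/F^{-1}((1+ε)²|x|), where F^{-1} denotes the inverse function of F. -/

import Mathlib

open MeasureTheory Filter Real

noncomputable section

abbrev E2 := EuclideanSpace ℝ (Fin 2)

/-- The centred Gaussian probability density `|φ₀(x)|² = (2πℓ²)⁻¹ exp(-|x|²/(2ℓ²))` on `ℝ²`. -/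
def phiSq (l : ℝ) (x : E2) : ℝ := (2 * π * l ^ 2)⁻¹ * Real.exp (-‖x‖ ^ 2 / (2 * l ^ 2))

lemma phiSq_nonneg {l : ℝ} (hl : 0 < l) (x : E2) : 0 ≤ phiSq l x := by
  unfold phiSq
  positivity

lemma phiSq_continuous (l : ℝ) : Continuous (phiSq l) := by
  unfold phiSq
  fun_prop

lemma phiSq_eq {l : ℝ} (x : E2) :
    phiSq l x = (2 * π * l ^ 2)⁻¹ * Real.exp (-(2 * l ^ 2)⁻¹ * ‖x‖ ^ 2) := by
  unfold phiSq
  congr 1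
  ring_nf

lemma rexp_integrable {b : ℝ} (hb : 0 < b) :
    Integrable (fun v : E2 => Real.exp (-b * ‖v‖ ^ 2)) := by
  have h := GaussianFourier.integrable_cexp_neg_mul_sq_norm_add (V := E2)
    (b := (b : ℂ)) (by simpa using hb) 0 (0 : E2)
  have h2 := h.norm
  refine h2.congr (Filter.Eventually.of_forall fun v => ?_)
  simp [Complex.norm_exp, ← Complex.ofReal_pow]

lemma phiSq_integrable {l : ℝ} (hl : 0 < l) : Integrable (phiSq l) := by
  have hb : (0 : ℝ) < (2 * l ^ 2)⁻¹ := by positivity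
  have := (rexp_integrable hb).const_mul ((2 * π * l ^ 2)⁻¹)
  refine this.congr (Filter.Eventually.of_forall fun v => ?_)
  rw [phiSq_eq]

lemma phiSq_total {l : ℝ} (hl : 0 < l) : ∫ y : E2, phiSq l y = 1 := by
  have hb : (0 : ℝ) < (2 * l ^ 2)⁻¹ := by positivity
  have h1 : ∫ y : E2, phiSq l y
      = (2 * π * l ^ 2)⁻¹ * ∫ y : E2, Real.exp (-(2 * l ^ 2)⁻¹ * ‖y‖ ^ 2) := by
    rw [← integral_const_mul]
    congr 1 with y
    rw [phiSq_eq]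
  rw [h1, GaussianFourier.integral_rexp_neg_mul_sq_norm hb]
  have hrank : Module.finrank ℝ E2 = 2 := finrank_euclideanSpace_fin
  rw [hrank]
  have : ((2 : ℕ) : ℝ) / 2 = 1 := by norm_num
  rw [this, Real.rpow_one]
  have hπ : (0 : ℝ) < 2 * π * l ^ 2 := by positivity
  field_simp

/-- Lower bound on the Gaussian convolution: for all sufficiently large `|x|`,
`(|φ₀|² * U)(x) ≥ (1-ε)/F⁻¹((1+ε)²|x|)`.  The (nonnegative) convolution integral is
taken in the extended sense (as a Lebesgue lower integral). -/
theorem stmt_7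
    (F : ℝ → ℝ)
    (hFpos : ∀ t > 0, 0 < F t)
    (hFcont : ContinuousOn F (Set.Ioi 0))
    (hFmono : StrictMonoOn F (Set.Ioi 0))
    (hFtop : Tendsto F atTop atTop)
    (U : E2 → ℝ)
    (hUpos : ∀ x, 0 < U x)
    (hUmeas : Measurable U)
    (hUdecay : Tendsto (fun x : E2 => F (1 / U x) / ‖x‖)
      (comap (fun x : E2 => ‖x‖) atTop) (nhds 1))
    (l : ℝ) (hl : 0 < l)
    (Finv : ℝ → ℝ)
    (hFinv : ∀ t > 0, Finv (F t) = t)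
    (ε : ℝ) (hε : ε ∈ Set.Ioo (0 : ℝ) 1) :
    ∃ R > 0, ∀ x : E2, R < ‖x‖ →
      ENNReal.ofReal ((1 - ε) / Finv ((1 + ε) ^ 2 * ‖x‖)) ≤
        ∫⁻ y : E2, ENNReal.ofReal (phiSq l y * U (x - y)) := by
  obtain ⟨hε0, hε1⟩ := hε
  -- Step 1: find a radius `r` capturing mass `1 - ε` of the Gaussian
  have hInt := phiSq_integrable hl
  obtain ⟨r, hr1, hrmass⟩ :
      ∃ r : ℕ, 1 ≤ r ∧ 1 - ε ≤ ∫ y in Metric.closedBall (0 : E2) r, phiSq l y := by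
    have hmono : Monotone fun n : ℕ => Metric.closedBall (0 : E2) n := fun m n hmn =>
      Metric.closedBall_subset_closedBall (by exact_mod_cast hmn)
    have hUn : ⋃ n : ℕ, Metric.closedBall (0 : E2) n = Set.univ :=
      Metric.iUnion_closedBall_nat 0
    have htend := tendsto_setIntegral_of_monotone
      (fun n : ℕ => (Metric.isClosed_closedBall).measurableSet) hmono
      (by rw [hUn]; exact hInt.integrableOn)
    rw [hUn, setIntegral_univ, phiSq_total hl] at htend
    have hev := (htend.eventually (eventually_gt_nhds (by linarith : 1 - ε < 1))).and
      (eventually_ge_atTop 1)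
    obtain ⟨n, hn1, hn2⟩ := hev.exists
    exact ⟨n, hn2, hn1.le⟩
  -- Step 2: decay bound on U
  have hd : ∀ᶠ z : E2 in comap (fun x : E2 => ‖x‖) atTop, F (1 / U z) / ‖z‖ < 1 + ε :=
    hUdecay.eventually (eventually_lt_nhds (by linarith : (1 : ℝ) < 1 + ε))
  rw [eventually_comap, eventually_atTop] at hd
  obtain ⟨M, hM⟩ := hd
  set M1 : ℝ := max M 1 with hM1def
  have hM1 : ∀ z : E2, M1 ≤ ‖z‖ → F (1 / U z) < (1 + ε) * ‖z‖ := by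
    intro z hz
    have hzpos : (0 : ℝ) < ‖z‖ := lt_of_lt_of_le (by norm_num : (0:ℝ) < 1)
      (le_trans (le_max_right M 1) hz)
    have := hM ‖z‖ (le_trans (le_max_left M 1) hz) z rfl
    rwa [div_lt_iff₀ hzpos] at this
  -- The radius R
  refine ⟨max (M1 + r) (max (r / ε) (max (|F 1|) 1)), by positivity, fun x hx => ?_⟩
  have hx1 : (1 : ℝ) < ‖x‖ :=
    lt_of_le_of_lt (le_max_of_le_right (le_max_of_le_right (le_max_right _ _))) hx
  have hxpos : (0 : ℝ) < ‖x‖ := by linarith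
  have hxr : r / ε < ‖x‖ := lt_of_le_of_lt (le_max_of_le_right (le_max_left _ _)) hx
  have hrx : (r : ℝ) ≤ ε * ‖x‖ := by
    rw [div_lt_iff₀ hε0] at hxr
    nlinarith
  have hxM : M1 + r < ‖x‖ := lt_of_le_of_lt (le_max_left _ _) hx
  have hxF : F 1 ≤ ‖x‖ := le_trans (le_abs_self _)
    (le_of_lt (lt_of_le_of_lt (le_max_of_le_right (le_max_of_le_right (le_max_left _ _))) hx))
  set s : ℝ := (1 + ε) ^ 2 * ‖x‖ with hsdef
  have hxs : ‖x‖ ≤ s := by nlinarith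
  have hsF1 : F 1 ≤ s := le_trans hxF hxs
  -- find t > 0 with F t = s
  obtain ⟨T, hT1, hTs⟩ : ∃ T : ℝ, 1 ≤ T ∧ s ≤ F T := by
    obtain ⟨T, h1, h2⟩ := ((hFtop.eventually (eventually_ge_atTop s)).and
      (eventually_ge_atTop 1)).exists
    exact ⟨T, h2, h1⟩
  obtain ⟨t, htmem, hFt⟩ : ∃ t ∈ Set.Icc (1 : ℝ) T, F t = s := by
    have hsub : Set.Icc (1 : ℝ) T ⊆ Set.Ioi 0 := fun u hu => lt_of_lt_of_le one_pos hu.1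
    have := intermediate_value_Icc hT1 (hFcont.mono hsub)
    exact this ⟨hsF1, hTs⟩
  have ht0 : (0 : ℝ) < t := lt_of_lt_of_le one_pos htmem.1
  have hFinv_s : Finv s = t := by rw [← hFt, hFinv t ht0]
  -- pointwise bound on U on the ball
  have hUbd : ∀ y ∈ Metric.closedBall (0 : E2) r, 1 / t ≤ U (x - y) := by
    intro y hy
    rw [Metric.mem_closedBall, dist_zero_right] at hy
    set z : E2 := x - y with hzdef
    have hzn : ‖x‖ - r ≤ ‖z‖ := by
      have := norm_sub_norm_le x y
      have hzy : ‖x‖ - ‖y‖ ≤ ‖z‖ := this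
      linarith
    have hzM : M1 ≤ ‖z‖ := by linarith
    have hzx : ‖z‖ ≤ ‖x‖ + r := le_trans (norm_sub_le x y) (by linarith)
    have h1 : F (1 / U z) < (1 + ε) * ‖z‖ := hM1 z hzM
    have h2 : (1 + ε) * ‖z‖ ≤ s := by
      rw [hsdef]
      nlinarith
    have hUz := hUpos z
    have h1U : (0 : ℝ) < 1 / U z := by positivity
    have hlt : 1 / U z < t := by
      by_contra hcon
      push_neg at hcon
      have := hFmono.monotoneOn (Set.mem_Ioi.mpr ht0) (Set.mem_Ioi.mpr h1U) hcon
      rw [hFt] at this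
      linarith
    rw [div_lt_iff₀ hUz] at hlt
    rw [div_le_iff₀ ht0]
    nlinarith
  -- main chain of inequalities
  rw [hFinv_s]
  have hIntBall : IntegrableOn (fun y => phiSq l y * (1 / t)) (Metric.closedBall (0 : E2) r) :=
    (hInt.integrableOn).mul_const _
  have hmeasUpper : Measurable fun y : E2 => ENNReal.ofReal (phiSq l y * U (x - y)) :=
    ENNReal.measurable_ofReal.comp ((phiSq_continuous l).measurable.mul
      (hUmeas.comp (measurable_const.sub measurable_id)))
  calc ENNReal.ofReal ((1 - ε) / t)
      ≤ ENNReal.ofReal (∫ y in Metric.closedBall (0 : E2) r, phiSq l y * (1 / t)) := by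
        apply ENNReal.ofReal_le_ofReal
        rw [integral_mul_const]
        rw [div_eq_mul_one_div]
        apply mul_le_mul_of_nonneg_right hrmass (by positivity)
    _ = ∫⁻ y in Metric.closedBall (0 : E2) r, ENNReal.ofReal (phiSq l y * (1 / t)) := by
        apply ofReal_integral_eq_lintegral_ofReal hIntBall
        exact Filter.Eventually.of_forall fun y => by
          have := phiSq_nonneg hl y
          positivity
    _ ≤ ∫⁻ y in Metric.closedBall (0 : E2) r, ENNReal.ofReal (phiSq l y * U (x - y)) := by
        apply setLIntegral_mono hmeasUpper
        intro y hy
        exact ENNReal.ofReal_le_ofReal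
          (mul_le_mul_of_nonneg_left (hUbd y hy) (phiSq_nonneg hl y))
    _ ≤ ∫⁻ y, ENNReal.ofReal (phiSq l y * U (x - y)) := setLIntegral_le_lintegral _ _
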